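/- Let S_r ≥ S_t > 0, let τ ∈ (0, 1), and let R_r, R_t ≥ 0 be target rates achievable under OMA, i.e., R_r ≤ τ·log₂(1 + S_r) and R_t ≤ (1 − τ)·log₂(1 + S_t). Then there exists a NOMA power split p_r ∈ [0, 1] with p_t = 1 − p_r such that log₂(1 + p_r·S_r) ≥ R_r and log₂(1 + p_t·S_t/(p_r·S_t + 1)) ≥ R_t; moreover the SIC condition log₂(1 + p_t·S_r/(p_r·S_r + 1)) ≥ R_t is also satisfied. Hence any OMA-achievable rate pair is NOMA-achievable with decoding order determined by the stronger link. -/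

import Mathlib

open Real Set

private lemma logb_rpow_aux {x : ℝ} (hx : 0 < x) (y : ℝ) :
    Real.logb 2 (x ^ y) = y * Real.logb 2 x := by
  rw [Real.logb, Real.logb, Real.log_rpow hx, mul_div_assoc]

/-- NOMA dominates OMA: if `S_r ≥ S_t > 0` and the rate pair `(R_r, R_t)` is
OMA-achievable with time fraction `τ ∈ (0,1)`, then there is a NOMA power split
`p_r ∈ [0,1]`, `p_t = 1 − p_r`, achieving both targets with feasible SIC at the
strong user. -/
theorem noma_dominates_oma
    (Sr St τ Rr Rt : ℝ) (hS : Sr ≥ St) (hSt : 0 < St)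
    (hτ : τ ∈ Set.Ioo (0:ℝ) 1) (hRr : 0 ≤ Rr) (hRt : 0 ≤ Rt)
    (hOMAr : Rr ≤ τ * Real.logb 2 (1 + Sr))
    (hOMAt : Rt ≤ (1 - τ) * Real.logb 2 (1 + St)) :
    ∃ pr ∈ Set.Icc (0:ℝ) 1,
      Real.logb 2 (1 + pr * Sr) ≥ Rr
      ∧ Real.logb 2 (1 + (1 - pr) * St / (pr * St + 1)) ≥ Rt
      ∧ Real.logb 2 (1 + (1 - pr) * Sr / (pr * Sr + 1)) ≥ Rt := by
  obtain ⟨hτ0, hτ1⟩ := hτ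
  have hSr : 0 < Sr := lt_of_lt_of_le hSt hS
  set A : ℝ := 1 + Sr with hA
  set B : ℝ := 1 + St with hB
  have hA1 : 1 < A := by simp only [hA]; linarith
  have hB1 : 1 < B := by simp only [hB]; linarith
  have hAτ1 : 1 ≤ A ^ τ := Real.one_le_rpow hA1.le hτ0.le
  have hAτA : A ^ τ ≤ A := by
    calc A ^ τ ≤ A ^ (1:ℝ) := Real.rpow_le_rpow_of_exponent_le hA1.le hτ1.le
    _ = A := Real.rpow_one A
  set pr : ℝ := (A ^ τ - 1) / Sr with hpr
  have hpr0 : 0 ≤ pr := div_nonneg (by linarith) hSr.le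
  have hpr1 : pr ≤ 1 := by
    rw [hpr, div_le_one hSr]; simp only [hA] at hAτA ⊢; linarith
  have hprSr : 1 + pr * Sr = A ^ τ := by rw [hpr, div_mul_cancel₀ _ hSr.ne']; ring
  -- key concavity inequality : 1 + pr * St ≤ B ^ τ
  have hkey : 1 + pr * St ≤ B ^ τ := by
    have hconc := Real.concaveOn_rpow hτ0.le hτ1.le
    set lam : ℝ := St / Sr with hlam
    have hlam0 : 0 ≤ lam := div_nonneg hSt.le hSr.le
    have hlam1 : 0 ≤ 1 - lam := by
      have : lam ≤ 1 := div_le_one_of_le₀ hS hSr.le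
      linarith
    have h := hconc.2 (x := 1) (y := A) (by simp) (by
        simp only [Set.mem_Ici, hA]; linarith) hlam1 hlam0 (by ring)
    have hx : (1 - lam) • (1:ℝ) + lam • A = B := by
      simp only [smul_eq_mul, hA, hB, hlam]
      field_simp
      ring
    rw [hx] at h
    have hprSt : pr * St = lam * (A ^ τ - 1) := by
      rw [hpr, hlam]; field_simp
    simp only [smul_eq_mul, Real.one_rpow] at h
    nlinarith
  have hBτ1 : 1 ≤ B ^ τ := Real.one_le_rpow hB1.le hτ0.le
  have hlogBB : Real.logb 2 B ≤ Real.logb 2 A :=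
    Real.logb_le_logb_of_le (by norm_num) (by linarith) (by simp only [hA, hB]; linarith)
  refine ⟨pr, ⟨hpr0, hpr1⟩, ?_, ?_, ?_⟩
  · rw [hprSr, logb_rpow_aux (by linarith) τ]
    exact hOMAr
  · have hd : 0 < pr * St + 1 := by positivity
    have he : 1 + (1 - pr) * St / (pr * St + 1) = B / (1 + pr * St) := by
      rw [hB]; field_simp; ring
    rw [he]
    have hstep : B ^ (1 - τ) ≤ B / (1 + pr * St) := by
      rw [Real.rpow_sub (by linarith), Real.rpow_one]
      apply div_le_div_of_nonneg_left (by linarith) (by linarith) hkey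
    calc Rt ≤ (1 - τ) * Real.logb 2 B := hOMAt
      _ = Real.logb 2 (B ^ (1 - τ)) := (logb_rpow_aux (by linarith) _).symm
      _ ≤ Real.logb 2 (B / (1 + pr * St)) :=
        Real.logb_le_logb_of_le (by norm_num) (by positivity) hstep
  · have hd : 0 < pr * Sr + 1 := by positivity
    have he : 1 + (1 - pr) * Sr / (pr * Sr + 1) = A / (1 + pr * Sr) := by
      rw [hA]; field_simp; ring
    rw [he, hprSr]
    have hAτpos : 0 < A ^ τ := by linarith
    have : A / A ^ τ = A ^ (1 - τ) := by
      rw [Real.rpow_sub (by linarith), Real.rpow_one]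
    rw [this, logb_rpow_aux (by linarith) _]
    calc Rt ≤ (1 - τ) * Real.logb 2 B := hOMAt
      _ ≤ (1 - τ) * Real.logb 2 A := by
          apply mul_le_mul_of_nonneg_left hlogBB (by linarith)
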